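/- arXiv:2005.06757 — 3 statements merged into one kernel-verified Lean document; each statement's English description precedes it below -/
import Mathlib

section
/- Lemma 1 (one-variable AM–GM inequality for quenched averages): Let B ⊆ V and suppose P_B satisfies the density-ratio condition with parameter b ∈ ℝ. Let X and f be measurable real-valued functions of the coupling vector J such that X(J) > 0 and X(flip_B J) = 1/X(J) for all J, and f(J) ≥ 0 and f(flip_B J) = f(J) for all J. Then E[f(J) X(J)] ≥ E[f(J) exp(−b J_B)]. -/
open MeasureTheory Real

variable {V : Type*}

/-- Spin value of a configuration at a site: `+1` or `-1`. -/
noncomputable def spin (σ : V → Bool) (i : V) : ℝ := if σ i then 1 else -1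

/-- `σ_A = ∏_{i ∈ A} σ_i`. -/
noncomputable def sigmaA (A : Finset V) (σ : V → Bool) : ℝ := ∏ i ∈ A, spin σ i

/-- `β Σ_A λ_A J_A σ_A` (minus the Hamiltonian, times β). -/
noncomputable def energy [Fintype V] [DecidableEq V] (β : ℝ) (lam J : Finset V → ℝ)
    (σ : V → Bool) : ℝ := β * ∑ A : Finset V, lam A * J A * sigmaA A σ

/-- Partition function `Z_J`. -/
noncomputable def Zfun [Fintype V] [DecidableEq V] (β : ℝ) (lam J : Finset V → ℝ) : ℝ :=
  ∑ σ : V → Bool, Real.exp (energy β lam J σ)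

/-- Gibbs expectation `⟨σ_B⟩_J`. -/
noncomputable def corr [Fintype V] [DecidableEq V] (β : ℝ) (lam J : Finset V → ℝ)
    (B : Finset V) : ℝ :=
  (∑ σ : V → Bool, sigmaA B σ * Real.exp (energy β lam J σ)) / Zfun β lam J

/-- Gibbs expectation `⟨σ_B σ_C⟩_J`. -/
noncomputable def corr2 [Fintype V] [DecidableEq V] (β : ℝ) (lam J : Finset V → ℝ)
    (B C : Finset V) : ℝ :=
  (∑ σ : V → Bool, sigmaA B σ * sigmaA C σ * Real.exp (energy β lam J σ)) / Zfun β lam J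

/-- Negate the coupling indexed by `B`. -/
noncomputable def flipJ [DecidableEq V] (B : Finset V) (J : Finset V → ℝ) : Finset V → ℝ :=
  Function.update J B (-(J B))

/-- The density-ratio condition `P(-x) = exp(-2 b x) P(x)`: the pushforward of `P` under
negation equals the measure with density `x ↦ exp (-2 b x)` with respect to `P`. -/
def densityRatio (P : Measure ℝ) (b : ℝ) : Prop :=
  P.map (fun x => -x) = P.withDensity (fun x => ENNReal.ofReal (Real.exp (-2 * b * x)))

/-- Change of variables for flipping one coordinate under the density-ratio condition. -/
lemma key_flip [Fintype V] [DecidableEq V]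
    (P : Finset V → Measure ℝ) [∀ A, IsProbabilityMeasure (P A)]
    (B : Finset V) (b : ℝ) (hPB : densityRatio (P B) b)
    (g : (Finset V → ℝ) → ENNReal) (hg : Measurable g) :
    ∫⁻ J, g (flipJ B J) ∂(Measure.pi P)
      = ∫⁻ J, g J * ENNReal.ofReal (Real.exp (-2 * b * J B)) ∂(Measure.pi P) := by
  have hd : Measurable fun x : ℝ => ENNReal.ofReal (Real.exp (-2 * b * x)) :=
    (Real.measurable_exp.comp (measurable_const.mul measurable_id)).ennreal_ofReal
  have hflip : Measurable (flipJ (V := V) B) := by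
    rw [measurable_pi_iff]
    intro A
    by_cases hA : A = B
    · subst hA
      simpa [flipJ] using
        (measurable_pi_apply A : Measurable fun J : Finset V → ℝ => J A)
    · simpa [flipJ, Function.update_of_ne hA] using
        (measurable_pi_apply A : Measurable fun J : Finset V → ℝ => J A)
  have hgd : Measurable fun J : Finset V → ℝ =>
      g J * ENNReal.ofReal (Real.exp (-2 * b * J B)) :=
    hg.mul (hd.comp (measurable_pi_apply B))
  refine MeasureTheory.lintegral_eq_of_lmarginal_eq {B} (hg.comp hflip) hgd ?_
  rw [MeasureTheory.lmarginal_singleton, MeasureTheory.lmarginal_singleton]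
  funext x
  have h1 : ∀ t : ℝ, flipJ B (Function.update x B t) = Function.update x B (-t) := by
    intro t
    simp [flipJ, Function.update_idem]
  simp only [h1, Function.update_self]
  have hgu : Measurable fun u : ℝ => g (Function.update x B u) :=
    hg.comp (measurable_update x)
  calc ∫⁻ t, g (Function.update x B (-t)) ∂(P B)
      = ∫⁻ u, g (Function.update x B u) ∂((P B).map fun t => -t) := by
        rw [lintegral_map hgu measurable_neg]
    _ = ∫⁻ u, g (Function.update x B u)
          ∂((P B).withDensity fun u => ENNReal.ofReal (Real.exp (-2 * b * u))) := by
        rw [hPB]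
    _ = ∫⁻ t, g (Function.update x B t) * ENNReal.ofReal (Real.exp (-2 * b * t)) ∂(P B) := by
        rw [lintegral_withDensity_eq_lintegral_mul (P B) hd hgu]
        simp [mul_comm]

/-- Lemma 1: one-variable AM–GM inequality for quenched averages. -/
theorem lemma1_one_variable_AMGM [Fintype V] [DecidableEq V]
    (P : Finset V → Measure ℝ) [∀ A, IsProbabilityMeasure (P A)]
    (B : Finset V) (b : ℝ) (hPB : densityRatio (P B) b)
    (X f : (Finset V → ℝ) → ℝ) (hX : Measurable X) (hf : Measurable f)
    (hXpos : ∀ J, 0 < X J)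
    (hXflip : ∀ J, X (flipJ B J) = 1 / X J)
    (hf0 : ∀ J, 0 ≤ f J)
    (hfflip : ∀ J, f (flipJ B J) = f J)
    (hint1 : Integrable (fun J => f J * X J) (Measure.pi P))
    (hint2 : Integrable (fun J => f J * Real.exp (-b * J B)) (Measure.pi P)) :
    ∫ J, f J * Real.exp (-b * J B) ∂(Measure.pi P) ≤
      ∫ J, f J * X J ∂(Measure.pi P) := by
  set pP := Measure.pi P with hpP
  have hd : Measurable fun x : ℝ => ENNReal.ofReal (Real.exp (-2 * b * x)) :=
    (Real.measurable_exp.comp (measurable_const.mul measurable_id)).ennreal_ofReal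
  have hJB : Measurable fun J : Finset V → ℝ => J B := measurable_pi_apply B
  -- the three lintegrals
  set I0 := ∫⁻ J, ENNReal.ofReal (f J * Real.exp (-b * J B)) ∂pP with hI0
  set I1 := ∫⁻ J, ENNReal.ofReal (f J * X J) ∂pP with hI1
  set I2 := ∫⁻ J, ENNReal.ofReal (f J / X J) * ENNReal.ofReal (Real.exp (-2 * b * J B)) ∂pP
    with hI2
  have hXne : ∀ J, X J ≠ 0 := fun J => ne_of_gt (hXpos J)
  -- I1 = I2 via the flip change of variables
  have hflipeq : I1 = I2 := by
    have := key_flip P B b hPB (fun J => ENNReal.ofReal (f J / X J))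
      ((hf.div hX).ennreal_ofReal)
    rw [hI1, hI2, ← this]
    refine lintegral_congr fun J => ?_
    have : f (flipJ B J) / X (flipJ B J) = f J * X J := by
      rw [hfflip, hXflip, div_div_eq_mul_div, div_one]
    simp [this]
  -- pointwise AM-GM
  have hpt : ∀ J, 2 * ENNReal.ofReal (f J * Real.exp (-b * J B)) ≤
      ENNReal.ofReal (f J * X J) +
        ENNReal.ofReal (f J / X J) * ENNReal.ofReal (Real.exp (-2 * b * J B)) := by
    intro J
    have hu : Real.exp (-2 * b * J B) = Real.exp (-b * J B) ^ 2 := by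
      rw [sq, ← Real.exp_add]; ring_nf
    set u := Real.exp (-b * J B) with hu'
    have hupos : 0 < u := Real.exp_pos _
    have hreal : 2 * (f J * u) ≤ f J * X J + f J / X J * u ^ 2 := by
      rw [div_mul_eq_mul_div, ← sub_nonneg]
      have hid : f J * X J + f J * u ^ 2 / X J - 2 * (f J * u)
          = f J * (X J - u) ^ 2 / X J := by
        field_simp [hXne J]
        ring
      rw [hid]
      exact div_nonneg (mul_nonneg (hf0 J) (sq_nonneg _)) (hXpos J).le
    calc 2 * ENNReal.ofReal (f J * u) = ENNReal.ofReal (2 * (f J * u)) := by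
          rw [ENNReal.ofReal_mul (by norm_num : (0:ℝ) ≤ 2)]; norm_num
      _ ≤ ENNReal.ofReal (f J * X J + f J / X J * u ^ 2) := ENNReal.ofReal_le_ofReal hreal
      _ = ENNReal.ofReal (f J * X J) + ENNReal.ofReal (f J / X J * u ^ 2) :=
          ENNReal.ofReal_add (mul_nonneg (hf0 J) (hXpos J).le)
            (mul_nonneg (div_nonneg (hf0 J) (hXpos J).le) (sq_nonneg u))
      _ = ENNReal.ofReal (f J * X J) +
            ENNReal.ofReal (f J / X J) * ENNReal.ofReal (u ^ 2) := by
          rw [ENNReal.ofReal_mul (div_nonneg (hf0 J) (hXpos J).le)]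
      _ = _ := by rw [hu]
  -- integrate the pointwise bound
  have hle : I0 ≤ I1 := by
    have h2 : 2 * I0 ≤ I1 + I2 := by
      have hexp : Measurable fun J : Finset V → ℝ => Real.exp (-b * J B) :=
        Real.measurable_exp.comp (measurable_const.mul hJB)
      have hm0 : Measurable fun J : Finset V → ℝ =>
          ENNReal.ofReal (f J * Real.exp (-b * J B)) := (hf.mul hexp).ennreal_ofReal
      calc 2 * I0 = ∫⁻ J, 2 * ENNReal.ofReal (f J * Real.exp (-b * J B)) ∂pP := by
            rw [hI0, lintegral_const_mul 2 hm0]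
        _ ≤ ∫⁻ J, (ENNReal.ofReal (f J * X J) +
              ENNReal.ofReal (f J / X J) * ENNReal.ofReal (Real.exp (-2 * b * J B))) ∂pP :=
            lintegral_mono fun J => hpt J
        _ = I1 + I2 := lintegral_add_left ((hf.mul hX).ennreal_ofReal) _
    rw [← hflipeq] at h2
    have : 2 * I0 ≤ 2 * I1 := by rw [two_mul I1]; exact h2
    exact (ENNReal.mul_le_mul_iff_right (by norm_num) (by norm_num)).mp this
  -- finiteness of I1
  have hI1fin : I1 ≠ ⊤ := by
    have := (hasFiniteIntegral_iff_ofReal (ae_of_all _ fun J =>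
      mul_nonneg (hf0 J) (hXpos J).le)).mp hint1.2
    exact this.ne
  -- convert to Bochner integrals
  have e0 : ∫ J, f J * Real.exp (-b * J B) ∂pP = I0.toReal := by
    rw [hI0, integral_eq_lintegral_of_nonneg_ae
      (ae_of_all _ fun J => mul_nonneg (hf0 J) (Real.exp_pos _).le) hint2.1]
  have e1 : ∫ J, f J * X J ∂pP = I1.toReal := by
    rw [hI1, integral_eq_lintegral_of_nonneg_ae
      (ae_of_all _ fun J => mul_nonneg (hf0 J) (hXpos J).le) hint1.1]
  rw [e0, e1]
  exact ENNReal.toReal_mono hI1fin hle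
end

section
/- Lemma 3 (two-variable AM–GM inequality for quenched averages, separate flips): Let B, C ⊆ V with B ≠ C, suppose P_B satisfies the density-ratio condition with parameter b ∈ ℝ and P_C satisfies the density-ratio condition with parameter c ∈ ℝ. Let X, Y and f be measurable real-valued functions of the coupling vector J such that X(J) > 0, Y(J) > 0, X(flip_B J) = 1/X(J), and Y(flip_C J) = 1/Y(J) for all J, and f(J) ≥ 0, f(flip_B J) = f(J), and f(flip_C J) = f(J) for all J. Then E[f(J) X(J) Y(J)] ≥ E[f(J) exp(−b J_B) exp(−c J_C)]. -/
open MeasureTheory Real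
open scoped ENNReal NNReal

variable {V : Type*}

section AuxReal

private lemma key_amgm {a u : ℝ} (ha : 0 < a) (hu : 0 ≤ u) : 2 * u ≤ a + u ^ 2 / a := by
  rw [← sub_nonneg]
  have h : a + u ^ 2 / a - 2 * u = (a - u) ^ 2 / a := by field_simp; ring
  rw [h]; positivity

private lemma amgm2 {a p q : ℝ} (ha : 0 < a) (hp : 0 ≤ p) (hq : 0 ≤ q) :
    2 * Real.sqrt (p * q) ≤ a * p + a⁻¹ * q := by
  have h1 : Real.sqrt (a * p) * Real.sqrt (a⁻¹ * q) = Real.sqrt (p * q) := by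
    rw [← Real.sqrt_mul (by positivity)]
    congr 1
    field_simp
  nlinarith [sq_nonneg (Real.sqrt (a * p) - Real.sqrt (a⁻¹ * q)),
    Real.sq_sqrt (by positivity : (0:ℝ) ≤ a * p),
    Real.sq_sqrt (by positivity : (0:ℝ) ≤ a⁻¹ * q), h1,
    Real.sqrt_nonneg (a * p), Real.sqrt_nonneg (a⁻¹ * q)]

private lemma core_amgm {x y xC yB s t : ℝ} (hx : 0 < x) (hy : 0 < y)
    (hxC : 0 < xC) (hyB : 0 < yB) (hs : 0 < s) (ht : 0 < t) :
    4 * (s * t) ≤ x * y + x⁻¹ * (yB * s ^ 2) + xC * (y⁻¹ * t ^ 2)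
      + xC⁻¹ * (yB⁻¹ * (s ^ 2 * t ^ 2)) := by
  set v := Real.sqrt (y * yB) with hv
  have hvpos : 0 < v := Real.sqrt_pos.mpr (by positivity)
  have hv2 : v ^ 2 = y * yB := Real.sq_sqrt (by positivity)
  have h1 : 2 * (s * v) ≤ x * y + x⁻¹ * (yB * s ^ 2) := by
    have e1 : y * (yB * s ^ 2) = (s * v) ^ 2 := by rw [mul_pow, hv2]; ring
    have h := amgm2 hx hy.le (by positivity : (0:ℝ) ≤ yB * s ^ 2)
    rwa [e1, Real.sqrt_sq (by positivity)] at h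
  have h2 : 2 * (s * t ^ 2 / v) ≤ xC * (y⁻¹ * t ^ 2) + xC⁻¹ * (yB⁻¹ * (s ^ 2 * t ^ 2)) := by
    have e2 : (y⁻¹ * t ^ 2) * (yB⁻¹ * (s ^ 2 * t ^ 2)) = (s * t ^ 2 / v) ^ 2 := by
      rw [div_pow, hv2]
      field_simp
    have h := amgm2 hxC (by positivity : (0:ℝ) ≤ y⁻¹ * t ^ 2)
      (by positivity : (0:ℝ) ≤ yB⁻¹ * (s ^ 2 * t ^ 2))
    rwa [e2, Real.sqrt_sq (by positivity)] at h
  have h3 : 2 * t ≤ v + t ^ 2 / v := key_amgm hvpos ht.le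
  have h4 := mul_le_mul_of_nonneg_left h3 (by positivity : (0:ℝ) ≤ 2 * s)
  have h5 : 2 * s * (v + t ^ 2 / v) = 2 * (s * v) + 2 * (s * t ^ 2 / v) := by ring
  rw [h5] at h4
  have h6 : 2 * s * (2 * t) = 4 * (s * t) := by ring
  rw [h6] at h4
  linarith

private lemma pointwise_amgm {F x y xC yB s t : ℝ} (hF : 0 ≤ F) (hx : 0 < x) (hy : 0 < y)
    (hxC : 0 < xC) (hyB : 0 < yB) (hs : 0 < s) (ht : 0 < t) :
    4 * (F * s * t) ≤ F * x * y + F * (1 / x) * yB * s ^ 2 + F * xC * (1 / y) * t ^ 2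
      + F * (1 / xC) * (1 / yB) * t ^ 2 * s ^ 2 := by
  have h := mul_le_mul_of_nonneg_left (core_amgm hx hy hxC hyB hs ht) hF
  calc 4 * (F * s * t) = F * (4 * (s * t)) := by ring
    _ ≤ F * (x * y + x⁻¹ * (yB * s ^ 2) + xC * (y⁻¹ * t ^ 2)
        + xC⁻¹ * (yB⁻¹ * (s ^ 2 * t ^ 2))) := h
    _ = _ := by ring

end AuxReal

section AuxFlip

private lemma flipJ_apply_ne [DecidableEq V] {A B : Finset V} (h : A ≠ B) (J : Finset V → ℝ) :
    flipJ B J A = J A := Function.update_of_ne h _ _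

private lemma flipJ_apply_self [DecidableEq V] (B : Finset V) (J : Finset V → ℝ) :
    flipJ B J B = -(J B) := Function.update_self _ _ _

private lemma flipJ_comm [DecidableEq V] {B C : Finset V} (h : B ≠ C) (J : Finset V → ℝ) :
    flipJ C (flipJ B J) = flipJ B (flipJ C J) := by
  funext A
  simp only [flipJ, Function.update_apply]
  by_cases h1 : A = B <;> by_cases h2 : A = C
  · exact absurd (h1.symm.trans h2) h
  · simp [h1, h2, Ne.symm h, h]
  · simp [h1, h2, Ne.symm h, h]
  · simp [h1, h2, Ne.symm h, h]

private lemma measurable_flipJ [DecidableEq V] (B : Finset V) :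
    Measurable (flipJ B : (Finset V → ℝ) → Finset V → ℝ) := by
  have h : (flipJ B : (Finset V → ℝ) → Finset V → ℝ)
      = fun J A => if A = B then -(J A) else J A := by
    funext J A
    by_cases h : A = B
    · subst h; simp [flipJ]
    · simp [flipJ, Function.update_of_ne h, h]
  rw [h]
  refine measurable_pi_lambda _ (fun A => ?_)
  by_cases hAB : A = B
  · simp only [hAB, if_true, eq_self_iff_true]
    exact (measurable_pi_apply B).neg
  · simp only [hAB, if_false]
    exact measurable_pi_apply A

end AuxFlip

section AuxMeasure

private lemma lmarginal_prod {ι : Type*} [Fintype ι] [DecidableEq ι] (P : ι → Measure ℝ)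
    [∀ i, SigmaFinite (P i)] (F : ι → ℝ → ℝ≥0∞) (hF : ∀ i, Measurable (F i)) (s : Finset ι) :
    ∀ x, (∫⋯∫⁻_s, (fun y => ∏ i, F i (y i)) ∂P) x
      = (∏ i ∈ s, ∫⁻ t, F i t ∂P i) * ∏ i ∈ sᶜ, F i (x i) := by
  induction s using Finset.induction with
  | empty => intro x; simp
  | @insert a s ha ih =>
    intro x
    have hFm : Measurable (fun y : ι → ℝ => ∏ i, F i (y i)) :=
      Finset.measurable_prod _ fun i _ => (hF i).comp (measurable_pi_apply i)
    rw [lmarginal_insert _ hFm ha]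
    simp_rw [ih]
    have h1 : ∀ t : ℝ, (∏ j ∈ sᶜ, F j (Function.update x a t j))
        = F a t * ∏ j ∈ sᶜ.erase a, F j (x j) := by
      intro t
      rw [← Finset.mul_prod_erase _ _ (Finset.mem_compl.mpr ha), Function.update_self]
      congr 1
      exact Finset.prod_congr rfl fun j hj => by
        rw [Function.update_of_ne (Finset.ne_of_mem_erase hj)]
    simp_rw [h1]
    rw [lintegral_const_mul _ ((hF a).mul_const _), lintegral_mul_const _ (hF a),
      Finset.prod_insert ha, Finset.compl_insert]
    ring

private lemma lintegral_pi_prod {ι : Type*} [Fintype ι] [DecidableEq ι] (P : ι → Measure ℝ)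
    [∀ i, SigmaFinite (P i)] (F : ι → ℝ → ℝ≥0∞) (hF : ∀ i, Measurable (F i)) :
    ∫⁻ x, ∏ i, F i (x i) ∂Measure.pi P = ∏ i, ∫⁻ t, F i t ∂P i := by
  have x0 : ι → ℝ := fun _ => 0
  rw [lintegral_eq_lmarginal_univ x0, lmarginal_prod P F hF Finset.univ x0]
  simp

end AuxMeasure

section AuxMap

private lemma pi_map_flip {V : Type*} [Fintype V] [DecidableEq V] (P : Finset V → Measure ℝ)
    [∀ A, IsProbabilityMeasure (P A)] (B : Finset V) (b : ℝ) (hPB : densityRatio (P B) b) :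
    (Measure.pi P).map (flipJ B)
      = (Measure.pi P).withDensity (fun J => ENNReal.ofReal (Real.exp (-2 * b * J B))) := by
  classical
  set ρ : ℝ → ℝ≥0∞ := fun x => ENNReal.ofReal (Real.exp (-2 * b * x)) with hρ
  have hρm : Measurable ρ := by
    rw [hρ]
    exact ((measurable_id.const_mul (-2 * b)).exp).ennreal_ofReal
  set Q : Finset V → Measure ℝ := Function.update P B ((P B).withDensity ρ) with hQ
  haveI hQsf : ∀ A, SigmaFinite (Q A) := by
    intro A
    by_cases h : A = B
    · rw [hQ, h, Function.update_self, hρ]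
      exact SigmaFinite.withDensity_ofReal _
    · rw [hQ, Function.update_of_ne h]
      infer_instance
  have hflipeq : (fun (J : Finset V → ℝ) (A : Finset V) => if A = B then -(J A) else J A)
      = flipJ B := by
    funext J A
    by_cases h : A = B
    · subst h; simp [flipJ]
    · simp [flipJ, Function.update_of_ne h, h]
  have hmp : MeasurePreserving (flipJ B) (Measure.pi P) (Measure.pi Q) := by
    rw [← hflipeq]
    refine measurePreserving_pi P Q (f := fun A x => if A = B then -x else x) fun A => ?_
    by_cases h : A = B
    · show MeasurePreserving (fun x : ℝ => if A = B then -x else x) (P A) (Q A)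
      have e : (fun x : ℝ => if A = B then -x else x) = fun x => -x := by
        funext x; simp [h]
      rw [e, hQ, h, Function.update_self]
      exact ⟨measurable_neg, hPB⟩
    · show MeasurePreserving (fun x : ℝ => if A = B then -x else x) (P A) (Q A)
      have e : (fun x : ℝ => if A = B then -x else x) = id := by
        funext x; simp [h]
      rw [e, hQ, Function.update_of_ne h]
      exact MeasurePreserving.id _
  have hpiQ : Measure.pi Q = (Measure.pi P).withDensity fun J => ρ (J B) := by
    refine Measure.pi_eq fun s hs => ?_
    set G : Finset V → ℝ → ℝ≥0∞ :=
      fun A x => (s A).indicator (fun x => if A = B then ρ x else 1) x with hG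
    have hGm : ∀ A, Measurable (G A) := by
      intro A
      by_cases h : A = B
      · have hGA : G A = (s A).indicator ρ := by rw [hG]; simp [h]
        rw [hGA]
        exact hρm.indicator (hs A)
      · have hGA : G A = (s A).indicator (fun _ => 1) := by rw [hG]; simp [h]
        rw [hGA]
        exact measurable_const.indicator (hs A)
    have hind : ∀ J : Finset V → ℝ,
        (Set.univ.pi s).indicator (fun J => ρ (J B)) J = ∏ A, G A (J A) := by
      intro J
      by_cases hJ : J ∈ Set.univ.pi s
      · rw [Set.indicator_of_mem hJ]
        have h2 : ∀ A, G A (J A) = if A = B then ρ (J A) else 1 := fun A =>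
          Set.indicator_of_mem (hJ A (Set.mem_univ A)) _
        simp_rw [h2]
        rw [Finset.prod_ite_eq' Finset.univ B (fun A => ρ (J A))]
        simp
      · rw [Set.indicator_of_notMem hJ]
        rw [Set.mem_pi] at hJ
        push_neg at hJ
        obtain ⟨A, -, hA⟩ := hJ
        exact (Finset.prod_eq_zero (Finset.mem_univ A) (Set.indicator_of_notMem hA _)).symm
    rw [withDensity_apply _ (MeasurableSet.univ_pi hs),
      ← lintegral_indicator (MeasurableSet.univ_pi hs)]
    simp_rw [hind]
    rw [lintegral_pi_prod P G hGm]
    refine Finset.prod_congr rfl fun A _ => ?_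
    by_cases h : A = B
    · have hGA : G A = (s A).indicator ρ := by rw [hG]; simp [h]
      rw [hGA, lintegral_indicator (hs A), ← withDensity_apply ρ (hs A), hQ, h,
        Function.update_self]
    · have hGA : G A = (s A).indicator (fun _ => 1) := by rw [hG]; simp [h]
      rw [hGA, lintegral_indicator (hs A), setLIntegral_one, hQ, Function.update_of_ne h]
  rw [hmp.map_eq, hpiQ]

end AuxMap

section AuxFlipIntegral

private lemma flip_integral {V : Type*} [Fintype V] [DecidableEq V] (P : Finset V → Measure ℝ)
    [∀ A, IsProbabilityMeasure (P A)] (B : Finset V) (b : ℝ) (hPB : densityRatio (P B) b)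
    (g : (Finset V → ℝ) → ℝ) (hg : Measurable g) (hgi : Integrable g (Measure.pi P)) :
    Integrable (fun J => g (flipJ B J) * Real.exp (-2 * b * J B)) (Measure.pi P) ∧
      ∫ J, g (flipJ B J) * Real.exp (-2 * b * J B) ∂(Measure.pi P)
        = ∫ J, g J ∂(Measure.pi P) := by
  classical
  have hmap := pi_map_flip P B b hPB
  have mflip : Measurable (flipJ B : (Finset V → ℝ) → Finset V → ℝ) := measurable_flipJ B
  have hwm : Measurable (fun J : Finset V → ℝ => ENNReal.ofReal (Real.exp (-2 * b * J B))) :=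
    by fun_prop
  set h : (Finset V → ℝ) → ℝ := fun J => g J * Real.exp (2 * b * J B) with hh
  have hhm : Measurable h := by
    rw [hh]
    exact hg.mul (by fun_prop)
  have hcomp : ∀ J, h (flipJ B J) = g (flipJ B J) * Real.exp (-2 * b * J B) := by
    intro J
    rw [hh]
    simp only []
    rw [flipJ_apply_self]
    have e : 2 * b * -J B = -2 * b * J B := by ring
    rw [e]
  have hprod2 : ∀ J : Finset V → ℝ, h J * Real.exp (-2 * b * J B) = g J := by
    intro J
    rw [hh]
    simp only []
    rw [mul_assoc, ← Real.exp_add]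
    have e : 2 * b * J B + -2 * b * J B = 0 := by ring
    rw [e, Real.exp_zero, mul_one]
  have hprod : ∀ J : Finset V → ℝ,
      h J * (ENNReal.ofReal (Real.exp (-2 * b * J B))).toReal = g J := by
    intro J
    rw [ENNReal.toReal_ofReal (Real.exp_nonneg _)]
    exact hprod2 J
  have h1 : Integrable h ((Measure.pi P).map (flipJ B)) := by
    rw [hmap, integrable_withDensity_iff hwm
      (Filter.Eventually.of_forall fun J => ENNReal.ofReal_lt_top)]
    have e : (fun J => h J * (ENNReal.ofReal (Real.exp (-2 * b * J B))).toReal) = g := by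
      funext J; exact hprod J
    rw [e]
    exact hgi
  have h2 := (integrable_map_measure hhm.aestronglyMeasurable mflip.aemeasurable).mp h1
  constructor
  · exact h2.congr (Filter.Eventually.of_forall fun J => hcomp J)
  · have h3 : ∫ J, g (flipJ B J) * Real.exp (-2 * b * J B) ∂(Measure.pi P)
        = ∫ J, h (flipJ B J) ∂(Measure.pi P) := by
      congr 1
      funext J
      rw [hcomp]
    rw [h3, ← integral_map mflip.aemeasurable hhm.aestronglyMeasurable, hmap]
    have hD : (Measure.pi P).withDensity (fun J => ENNReal.ofReal (Real.exp (-2 * b * J B)))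
        = (Measure.pi P).withDensity
            (fun J => ((Real.exp (-2 * b * J B)).toNNReal : ℝ≥0∞)) := rfl
    rw [hD, integral_withDensity_eq_integral_smul
      ((by fun_prop : Measurable fun J : Finset V → ℝ => Real.exp (-2 * b * J B)).real_toNNReal) h]
    congr 1
    funext J
    have e1 : ((Real.exp (-2 * b * J B)).toNNReal : ℝ≥0) • h J
        = Real.exp (-2 * b * J B) * h J := by
      rw [NNReal.smul_def, Real.coe_toNNReal _ (Real.exp_nonneg _), smul_eq_mul]
    rw [e1, mul_comm (Real.exp (-2 * b * J B)) (h J)]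
    exact hprod2 J
  done

end AuxFlipIntegral

private lemma exp_neg_two_sq (r x : ℝ) : Real.exp (-2 * r * x) = Real.exp (-r * x) ^ 2 := by
  rw [pow_two, ← Real.exp_add]
  congr 1
  ring


/-- Lemma 3: two-variable AM–GM inequality for quenched averages (separate flips). -/
theorem lemma3_two_variable_AMGM_separate [Fintype V] [DecidableEq V]
    (P : Finset V → Measure ℝ) [∀ A, IsProbabilityMeasure (P A)]
    (B C : Finset V) (hBC : B ≠ C) (b c : ℝ)
    (hPB : densityRatio (P B) b) (hPC : densityRatio (P C) c)
    (X Y f : (Finset V → ℝ) → ℝ)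
    (hX : Measurable X) (hY : Measurable Y) (hf : Measurable f)
    (hXpos : ∀ J, 0 < X J) (hYpos : ∀ J, 0 < Y J)
    (hXflip : ∀ J, X (flipJ B J) = 1 / X J)
    (hYflip : ∀ J, Y (flipJ C J) = 1 / Y J)
    (hf0 : ∀ J, 0 ≤ f J)
    (hfflipB : ∀ J, f (flipJ B J) = f J)
    (hfflipC : ∀ J, f (flipJ C J) = f J)
    (hint1 : Integrable (fun J => f J * X J * Y J) (Measure.pi P))
    (hint2 : Integrable (fun J => f J * Real.exp (-b * J B) * Real.exp (-c * J C))
      (Measure.pi P)) :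
    ∫ J, f J * Real.exp (-b * J B) * Real.exp (-c * J C) ∂(Measure.pi P) ≤
      ∫ J, f J * X J * Y J ∂(Measure.pi P) := by
  classical
  have mflipC : Measurable (flipJ C : (Finset V → ℝ) → Finset V → ℝ) := measurable_flipJ C
  have hgm : Measurable (fun J : Finset V → ℝ => f J * X J * Y J) := (hf.mul hX).mul hY
  obtain ⟨hi2, hA2⟩ := flip_integral P B b hPB _ hgm hint1
  obtain ⟨hi3, hA3⟩ := flip_integral P C c hPC _ hgm hint1
  have hg2m : Measurable (fun K : Finset V → ℝ =>
      f (flipJ C K) * X (flipJ C K) * Y (flipJ C K) * Real.exp (-2 * c * K C)) :=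
    (((hf.comp mflipC).mul (hX.comp mflipC)).mul (hY.comp mflipC)).mul
      (by fun_prop)
  obtain ⟨hi4, hA4⟩ := flip_integral P B b hPB _ hg2m hi3
  have hBJC : ∀ J : Finset V → ℝ, flipJ B J C = J C := fun J => flipJ_apply_ne (Ne.symm hBC) J
  simp only [hBJC] at hi4 hA4
  -- the four integrands
  have hpt : ∀ J : Finset V → ℝ,
      4 * (f J * Real.exp (-b * J B) * Real.exp (-c * J C)) ≤
        f J * X J * Y J
        + f (flipJ B J) * X (flipJ B J) * Y (flipJ B J) * Real.exp (-2 * b * J B)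
        + f (flipJ C J) * X (flipJ C J) * Y (flipJ C J) * Real.exp (-2 * c * J C)
        + f (flipJ C (flipJ B J)) * X (flipJ C (flipJ B J)) * Y (flipJ C (flipJ B J))
            * Real.exp (-2 * c * J C) * Real.exp (-2 * b * J B) := by
    intro J
    rw [hfflipC (flipJ B J), hYflip (flipJ B J), flipJ_comm hBC J, hXflip (flipJ C J),
      hfflipB J, hXflip J, hfflipC J, hYflip J,
      exp_neg_two_sq b (J B), exp_neg_two_sq c (J C)]
    exact pointwise_amgm (hf0 J) (hXpos J) (hYpos J) (hXpos (flipJ C J)) (hYpos (flipJ B J))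
      (Real.exp_pos _) (Real.exp_pos _)
  have hi12 : Integrable (fun J =>
      f J * X J * Y J
      + f (flipJ B J) * X (flipJ B J) * Y (flipJ B J) * Real.exp (-2 * b * J B)) (Measure.pi P) := hint1.add hi2
  have hi123 : Integrable (fun J =>
      f J * X J * Y J
      + f (flipJ B J) * X (flipJ B J) * Y (flipJ B J) * Real.exp (-2 * b * J B)
      + f (flipJ C J) * X (flipJ C J) * Y (flipJ C J) * Real.exp (-2 * c * J C)) (Measure.pi P) := hi12.add hi3
  have hsum_int : Integrable (fun J =>
      f J * X J * Y J
      + f (flipJ B J) * X (flipJ B J) * Y (flipJ B J) * Real.exp (-2 * b * J B)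
      + f (flipJ C J) * X (flipJ C J) * Y (flipJ C J) * Real.exp (-2 * c * J C)
      + f (flipJ C (flipJ B J)) * X (flipJ C (flipJ B J)) * Y (flipJ C (flipJ B J))
          * Real.exp (-2 * c * J C) * Real.exp (-2 * b * J B)) (Measure.pi P) :=
    hi123.add hi4
  have hsum_eq : ∫ J, (f J * X J * Y J
      + f (flipJ B J) * X (flipJ B J) * Y (flipJ B J) * Real.exp (-2 * b * J B)
      + f (flipJ C J) * X (flipJ C J) * Y (flipJ C J) * Real.exp (-2 * c * J C)
      + f (flipJ C (flipJ B J)) * X (flipJ C (flipJ B J)) * Y (flipJ C (flipJ B J))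
          * Real.exp (-2 * c * J C) * Real.exp (-2 * b * J B)) ∂(Measure.pi P)
      = 4 * ∫ J, f J * X J * Y J ∂(Measure.pi P) := by
    rw [integral_add hi123 hi4, integral_add hi12 hi3,
      integral_add hint1 hi2, hA2, hA3, hA4, hA3]
    ring
  have hmono := integral_mono (hint2.const_mul 4) hsum_int hpt
  rw [integral_const_mul, hsum_eq] at hmono
  linarith
end

section
/- Double-flip partition-function ratio identity: Let B, C ⊆ V with B ≠ C. For every coupling vector J, the ratio of partition functions obtained by negating the couplings J_B and J_C satisfies Z_{flip_B (flip_C J)} / Z_J = cosh(2βλ_B J_B) cosh(2βλ_C J_C) + sinh(2βλ_B J_B) sinh(2βλ_C J_C) ⟨σ_B σ_C⟩_J − sinh(2βλ_B J_B) cosh(2βλ_C J_C) ⟨σ_B⟩_J − cosh(2βλ_B J_B) sinh(2βλ_C J_C) ⟨σ_C⟩_J. -/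
open MeasureTheory Real

variable {V : Type*}

lemma sigmaA_pm (A : Finset V) (σ : V → Bool) : sigmaA A σ = 1 ∨ sigmaA A σ = -1 := by
  classical
  unfold sigmaA
  induction A using Finset.induction_on with
  | empty => simp
  | insert _ _ h ih =>
      rw [Finset.prod_insert h]
      rcases ih with h1 | h1 <;> rw [h1] <;> unfold spin <;> split <;> simp

lemma exp_neg_mul_pm (a s : ℝ) (hs : s = 1 ∨ s = -1) :
    Real.exp (-(a * s)) = Real.cosh a - s * Real.sinh a := by
  rcases hs with h | h <;> subst h
  · simpa using (Real.cosh_sub_sinh a).symm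
  · simpa using (Real.cosh_add_sinh a).symm

/-- Double-flip partition-function ratio identity. -/
theorem double_flip_ratio [Fintype V] [DecidableEq V]
    (β : ℝ) (hβ : 0 < β) (lam : Finset V → ℝ) (J : Finset V → ℝ)
    (B C : Finset V) (hBC : B ≠ C) :
    Zfun β lam (flipJ B (flipJ C J)) / Zfun β lam J =
      Real.cosh (2 * β * lam B * J B) * Real.cosh (2 * β * lam C * J C)
      + Real.sinh (2 * β * lam B * J B) * Real.sinh (2 * β * lam C * J C)
          * corr2 β lam J B C
      - Real.sinh (2 * β * lam B * J B) * Real.cosh (2 * β * lam C * J C)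
          * corr β lam J B
      - Real.cosh (2 * β * lam B * J B) * Real.sinh (2 * β * lam C * J C)
          * corr β lam J C := by

  classical
  set b := 2 * β * lam B * J B with hb
  set c := 2 * β * lam C * J C with hc
  set J' := flipJ B (flipJ C J) with hJ'
  have hJ'B : J' B = -(J B) := by
    simp [hJ', flipJ, Function.update_self, Function.update_of_ne hBC]
  have hJ'C : J' C = -(J C) := by
    simp [hJ', flipJ, Function.update_of_ne (Ne.symm hBC), Function.update_self]
  have hJ'other : ∀ A : Finset V, A ≠ B → A ≠ C → J' A = J A := by
    intro A h1 h2
    simp [hJ', flipJ, Function.update_of_ne h1, Function.update_of_ne h2]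
  have henergy : ∀ σ : V → Bool,
      energy β lam J' σ = energy β lam J σ - b * sigmaA B σ - c * sigmaA C σ := by
    intro σ
    unfold energy
    have key : ∑ A : Finset V, lam A * J' A * sigmaA A σ
        = (∑ A : Finset V, lam A * J A * sigmaA A σ)
          + ∑ A ∈ ({B, C} : Finset (Finset V)),
              (lam A * J' A * sigmaA A σ - lam A * J A * sigmaA A σ) := by
      have h0 : ∑ A ∈ ({B, C} : Finset (Finset V)),
          (lam A * J' A * sigmaA A σ - lam A * J A * sigmaA A σ)
          = ∑ A : Finset V, (lam A * J' A * sigmaA A σ - lam A * J A * sigmaA A σ) := by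
        apply Finset.sum_subset (Finset.subset_univ _)
        intro A _ hA
        simp only [Finset.mem_insert, Finset.mem_singleton, not_or] at hA
        rw [hJ'other A hA.1 hA.2]
        ring
      rw [h0, Finset.sum_sub_distrib]
      ring
    rw [key, Finset.sum_pair hBC, hJ'B, hJ'C, hb, hc]
    ring
  set SB := ∑ σ : V → Bool, sigmaA B σ * Real.exp (energy β lam J σ) with hSB
  set SC := ∑ σ : V → Bool, sigmaA C σ * Real.exp (energy β lam J σ) with hSC
  set SBC := ∑ σ : V → Bool, sigmaA B σ * sigmaA C σ * Real.exp (energy β lam J σ) with hSBC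
  have hZpos : 0 < Zfun β lam J := by
    apply Finset.sum_pos (fun σ _ => Real.exp_pos _) Finset.univ_nonempty
  have hZ' : Zfun β lam J' =
      Real.cosh b * Real.cosh c * Zfun β lam J + Real.sinh b * Real.sinh c * SBC
        - Real.sinh b * Real.cosh c * SB - Real.cosh b * Real.sinh c * SC := by
    unfold Zfun
    rw [hSB, hSC, hSBC, Finset.mul_sum, Finset.mul_sum, Finset.mul_sum, Finset.mul_sum,
      ← Finset.sum_add_distrib, ← Finset.sum_sub_distrib, ← Finset.sum_sub_distrib]
    apply Finset.sum_congr rfl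
    intro σ _
    rw [henergy σ]
    have e1 : energy β lam J σ - b * sigmaA B σ - c * sigmaA C σ
        = energy β lam J σ + (-(b * sigmaA B σ)) + (-(c * sigmaA C σ)) := by ring
    rw [e1, Real.exp_add, Real.exp_add,
      exp_neg_mul_pm b _ (sigmaA_pm B σ), exp_neg_mul_pm c _ (sigmaA_pm C σ)]
    ring
  rw [hZ']
  unfold corr corr2
  rw [← hSB, ← hSC, ← hSBC]
  field_simp
end
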